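/- Let b be a prime, α, β > 1 reals, θ = min(α,β), and let 0 < γ_j^{(1)} ≤ 1, 0 < γ_j^{(2)} ≤ 1 for all j. Then for every real M ≥ 1 and all s,t ∈ ℕ, the set A_M = {(k,l) ∈ ℕ^s × ℤ^t : (ρ_{α,γ^{(1)}}(k))^{-1}·(r_{β,γ^{(2)}}(l))^{-1} ≤ M} is contained (under the inclusion ℕ ⊆ ℤ in each of the first s coordinates) in the set {(k,l) ∈ ℤ^s × ℤ^t : ∏_{j=1}^s (r_{θ, b^α γ_j^{(1)}}(k_j))^{-1} · ∏_{j=1}^t (r_{θ, γ_j^{(2)}}(l_j))^{-1} ≤ M}. -/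
import Mathlib


open scoped BigOperators

/-- The Walsh-space decay function ρ_{α,γ} : ℕ → ℝ,
    ρ_{α,γ}(0) = 1 and ρ_{α,γ}(k) = γ·b^{-α·⌊log_b k⌋} for k ≥ 1. -/
noncomputable def rho (b : ℕ) (α γ : ℝ) (k : ℕ) : ℝ :=
  if k = 0 then 1 else γ * (b : ℝ) ^ (-(α * (Nat.log b k : ℝ)))

/-- The Korobov-space decay function r_{x,γ} : ℤ → ℝ,
    r_{x,γ}(0) = 1 and r_{x,γ}(l) = γ·|l|^{-x} for l ≠ 0. -/
noncomputable def rK (x γ : ℝ) (l : ℤ) : ℝ :=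
  if l = 0 then 1 else γ * |(l : ℝ)| ^ (-x)

lemma rho_pos {b : ℕ} (hb : 1 < b) {α γ : ℝ} (hγ : 0 < γ) (k : ℕ) : 0 < rho b α γ k := by
  unfold rho
  split
  · norm_num
  · exact mul_pos hγ (Real.rpow_pos_of_pos (by positivity) _)

lemma rK_pos {x γ : ℝ} (hγ : 0 < γ) (l : ℤ) : 0 < rK x γ l := by
  unfold rK
  split
  · norm_num
  · next hl =>
    refine mul_pos hγ (Real.rpow_pos_of_pos ?_ _)
    rw [abs_pos]
    exact_mod_cast hl

lemma rK_mono_exp {x y γ : ℝ} (hγ : 0 < γ) (hxy : x ≤ y) (l : ℤ) : rK y γ l ≤ rK x γ l := by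
  unfold rK
  split
  · exact le_rfl
  · next hl =>
    have h1 : (1 : ℝ) ≤ |(l : ℝ)| := by
      rw [← Int.cast_abs]
      exact_mod_cast Int.one_le_abs (by exact_mod_cast hl)
    exact mul_le_mul_of_nonneg_left
      (Real.rpow_le_rpow_of_exponent_le h1 (neg_le_neg hxy)) hγ.le

lemma rho_le_rK {b : ℕ} (hb : 1 < b) {α θ γ : ℝ} (hγ : 0 < γ) (hθα : θ ≤ α)
    (hα : 0 < α) (k : ℕ) :
    rho b α γ k ≤ rK θ ((b : ℝ) ^ α * γ) (k : ℤ) := by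
  have hbR : (1 : ℝ) < b := by exact_mod_cast hb
  have hb0 : (0 : ℝ) < b := by linarith
  rcases Nat.eq_zero_or_pos k with hk | hk
  · subst hk; simp [rho, rK]
  · have hk0 : (k : ℤ) ≠ 0 := by positivity
    have hkR : (1 : ℝ) ≤ (k : ℝ) := by exact_mod_cast hk
    rw [rho, rK, if_neg hk.ne', if_neg hk0]
    have habs : |((k : ℤ) : ℝ)| = (k : ℝ) := by
      rw [Int.cast_natCast, abs_of_nonneg (by positivity)]
    rw [habs]
    set L : ℕ := Nat.log b k with hL
    have hklt : (k : ℝ) ≤ (b : ℝ) ^ ((L : ℝ) + 1) := by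
      have h2 : (k : ℝ) ≤ (b : ℝ) ^ (L + 1 : ℕ) :=
        by exact_mod_cast (Nat.lt_pow_succ_log_self hb k).le
      calc (k : ℝ) ≤ (b : ℝ) ^ (L + 1 : ℕ) := h2
        _ = (b : ℝ) ^ ((L : ℝ) + 1) := by
            rw [← Real.rpow_natCast]; push_cast; ring_nf
    have step1 : (k : ℝ) ^ (-α) ≤ (k : ℝ) ^ (-θ) :=
      Real.rpow_le_rpow_of_exponent_le hkR (neg_le_neg hθα)
    have step2 : ((b : ℝ) ^ ((L : ℝ) + 1)) ^ (-α) ≤ (k : ℝ) ^ (-α) :=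
      Real.rpow_le_rpow_of_nonpos (by linarith) hklt (by linarith)
    have heq : ((b : ℝ) ^ ((L : ℝ) + 1)) ^ (-α) = (b : ℝ) ^ (-α * ((L : ℝ) + 1)) := by
      rw [← Real.rpow_mul hb0.le]; ring_nf
    have key : (b : ℝ) ^ (-α * ((L : ℝ) + 1)) ≤ (k : ℝ) ^ (-θ) := by
      rw [← heq]; exact step2.trans step1
    have hpow : (b : ℝ) ^ α * (b : ℝ) ^ (-α * ((L : ℝ) + 1)) = (b : ℝ) ^ (-(α * (L : ℝ))) := by
      rw [← Real.rpow_add hb0]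
      congr 1
      ring
    calc γ * (b : ℝ) ^ (-(α * (L : ℝ)))
        = (b : ℝ) ^ α * γ * (b : ℝ) ^ (-α * ((L : ℝ) + 1)) := by
          rw [mul_comm ((b:ℝ)^α) γ, mul_assoc, hpow]
      _ ≤ (b : ℝ) ^ α * γ * (k : ℝ) ^ (-θ) := by
          apply mul_le_mul_of_nonneg_left key
          positivity

theorem stmt_2 (b : ℕ) (hb : b.Prime) (α β : ℝ) (hα : 1 < α) (hβ : 1 < β)
    (θ : ℝ) (hθ : θ = min α β)
    (γ1 γ2 : ℕ → ℝ) (hγ1 : ∀ j, 0 < γ1 j ∧ γ1 j ≤ 1) (hγ2 : ∀ j, 0 < γ2 j ∧ γ2 j ≤ 1)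
    (M : ℝ) (hM : 1 ≤ M) (s t : ℕ) (k : Fin s → ℕ) (l : Fin t → ℤ)
    (h : (∏ j : Fin s, rho b α (γ1 j) (k j))⁻¹ * (∏ j : Fin t, rK β (γ2 j) (l j))⁻¹ ≤ M) :
    (∏ j : Fin s, (rK θ ((b : ℝ) ^ α * γ1 j) (k j : ℤ))⁻¹) *
      (∏ j : Fin t, (rK θ (γ2 j) (l j))⁻¹) ≤ M := by
  have hb1 : 1 < b := hb.one_lt
  have hθα : θ ≤ α := hθ ▸ min_le_left α β
  have hθβ : θ ≤ β := hθ ▸ min_le_right α β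
  have hP1 : ∀ j : Fin s, 0 < rho b α (γ1 j) (k j) := fun j => rho_pos hb1 (hγ1 j).1 _
  have hP2 : ∀ j : Fin t, 0 < rK β (γ2 j) (l j) := fun j => rK_pos (hγ2 j).1 _
  have hQ1 : ∀ j : Fin s, 0 < rK θ ((b : ℝ) ^ α * γ1 j) (k j : ℤ) := by
    intro j
    refine rK_pos ?_ _
    have : (0:ℝ) < (b:ℝ) ^ α := Real.rpow_pos_of_pos (by exact_mod_cast hb.pos) _
    exact mul_pos this (hγ1 j).1
  have hQ2 : ∀ j : Fin t, 0 < rK θ (γ2 j) (l j) := fun j => rK_pos (hγ2 j).1 _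
  have le1 : ∀ j : Fin s, rho b α (γ1 j) (k j) ≤ rK θ ((b : ℝ) ^ α * γ1 j) (k j : ℤ) :=
    fun j => rho_le_rK hb1 (hγ1 j).1 hθα (by linarith) _
  have le2 : ∀ j : Fin t, rK β (γ2 j) (l j) ≤ rK θ (γ2 j) (l j) :=
    fun j => rK_mono_exp (hγ2 j).1 hθβ _
  have hprod1 : ∏ j : Fin s, rho b α (γ1 j) (k j) ≤
      ∏ j : Fin s, rK θ ((b : ℝ) ^ α * γ1 j) (k j : ℤ) :=
    Finset.prod_le_prod (fun j _ => (hP1 j).le) (fun j _ => le1 j)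
  have hprod2 : ∏ j : Fin t, rK β (γ2 j) (l j) ≤ ∏ j : Fin t, rK θ (γ2 j) (l j) :=
    Finset.prod_le_prod (fun j _ => (hP2 j).le) (fun j _ => le2 j)
  have hP1pos : 0 < ∏ j : Fin s, rho b α (γ1 j) (k j) :=
    Finset.prod_pos (fun j _ => hP1 j)
  have hP2pos : 0 < ∏ j : Fin t, rK β (γ2 j) (l j) :=
    Finset.prod_pos (fun j _ => hP2 j)
  have hQ1pos : 0 < ∏ j : Fin s, rK θ ((b : ℝ) ^ α * γ1 j) (k j : ℤ) :=
    Finset.prod_pos (fun j _ => hQ1 j)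
  have hQ2pos : 0 < ∏ j : Fin t, rK θ (γ2 j) (l j) :=
    Finset.prod_pos (fun j _ => hQ2 j)
  rw [Finset.prod_inv_distrib, Finset.prod_inv_distrib]
  calc (∏ j : Fin s, rK θ ((b : ℝ) ^ α * γ1 j) (k j : ℤ))⁻¹ *
        (∏ j : Fin t, rK θ (γ2 j) (l j))⁻¹
      ≤ (∏ j : Fin s, rho b α (γ1 j) (k j))⁻¹ * (∏ j : Fin t, rK β (γ2 j) (l j))⁻¹ := by
        apply mul_le_mul
        · exact inv_anti₀ hP1pos hprod1
        · exact inv_anti₀ hP2pos hprod2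
        · positivity
        · positivity
    _ ≤ M := h
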